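/- Deterministic telescoping bound for UAdam (full-gradient case): let f : ℝ^d → ℝ be differentiable with L-Lipschitz gradient and bounded below by f*. Let β ∈ [0,1), λ̃ ∈ [0,1], and η > 0 with Lη ≤ 1/2. Define m_0 = 0, m_t = β m_{t-1} + (1-β)∇f(x_t), and x_{t+1} = x_t - η(m_t - λ̃(m_t - ∇f(x_t))). Then for every T ≥ 1, (η/2) Σ_{t=1}^T ‖∇f(x_t)‖² ≤ f(x_1) - f* + ((1-λ̃)η/2) Σ_{t=1}^T ‖m_t - ∇f(x_t)‖² - (η/4) Σ_{t=1}^T ( λ̃‖∇f(x_t)‖² + (1-λ̃)‖m_t‖² ). -/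

import Mathlib

open Finset

lemma descent {d : ℕ} (f : EuclideanSpace ℝ (Fin d) → ℝ) (L : ℝ)
    (hf : Differentiable ℝ f)
    (hL : ∀ x y : EuclideanSpace ℝ (Fin d), ‖gradient f x - gradient f y‖ ≤ L * ‖x - y‖)
    (x v : EuclideanSpace ℝ (Fin d)) :
    f (x + v) ≤ f x + inner ℝ (gradient f x) v + L / 2 * ‖v‖ ^ 2 := by
  set φ : ℝ → ℝ := fun t => f (x + t • v) - t * inner ℝ (gradient f x) v - L * ‖v‖ ^ 2 * t ^ 2 / 2
    with hφ
  have hd : ∀ t : ℝ, HasDerivAt φ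
      ((inner ℝ (gradient f (x + t • v)) v : ℝ) - inner ℝ (gradient f x) v - L * ‖v‖ ^ 2 * t) t := by
    intro t
    have h1 : HasDerivAt (fun t : ℝ => x + t • v) v t := by
      simpa using ((hasDerivAt_id t).smul_const v).const_add x
    have h2 : HasDerivAt (fun t : ℝ => f (x + t • v))
        ((inner ℝ (gradient f (x + t • v)) v : ℝ)) t := by
      have h3 := ((hf (x + t • v)).hasGradientAt).hasFDerivAt.comp_hasDerivAt t h1
      exact h3.congr_deriv (by simp [InnerProductSpace.toDual_apply_apply])
    have h4 : HasDerivAt (fun t : ℝ => t * (inner ℝ (gradient f x) v : ℝ))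
        (inner ℝ (gradient f x) v) t := by
      simpa using (hasDerivAt_id t).mul_const (inner ℝ (gradient f x) v : ℝ)
    have h5 : HasDerivAt (fun t : ℝ => L * ‖v‖ ^ 2 * t ^ 2 / 2) (L * ‖v‖ ^ 2 * t) t := by
      have := ((hasDerivAt_pow 2 t).const_mul (L * ‖v‖ ^ 2)).div_const 2
      exact this.congr_deriv (by push_cast; ring)
    exact (h2.sub h4).sub h5
  have hanti : AntitoneOn φ (Set.Icc 0 1) := by
    apply antitoneOn_of_deriv_nonpos (convex_Icc 0 1)
    · exact Continuous.continuousOn (by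
        exact ((hf.continuous.comp (by continuity)).sub (by continuity)).sub (by continuity))
    · intro t _
      exact (hd t).differentiableAt.differentiableWithinAt
    · intro t ht
      rw [interior_Icc] at ht
      rw [(hd t).deriv]
      have hb : (inner ℝ (gradient f (x + t • v)) v : ℝ) - inner ℝ (gradient f x) v
          ≤ L * ‖v‖ ^ 2 * t := by
        have := real_inner_le_norm (gradient f (x + t • v) - gradient f x) v
        rw [inner_sub_left] at this
        have h2 := hL (x + t • v) x
        have : (inner ℝ (gradient f (x + t • v)) v : ℝ) - inner ℝ (gradient f x) v
            ≤ L * ‖x + t • v - x‖ * ‖v‖ :=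
          this.trans (by nlinarith [norm_nonneg v])
        simpa [norm_smul, abs_of_pos ht.1, pow_two] using this.trans_eq (by
          rw [add_sub_cancel_left, norm_smul, Real.norm_eq_abs, abs_of_pos ht.1]; ring)
      linarith
  have := hanti (Set.mem_Icc.mpr ⟨le_refl 0, zero_le_one⟩)
      (Set.mem_Icc.mpr ⟨zero_le_one, le_refl 1⟩) zero_le_one
  simp only [hφ, one_smul, zero_smul, add_zero, one_pow, mul_one, one_mul,
    zero_pow, mul_zero, zero_mul, sub_zero, zero_div, ne_eq, OfNat.ofNat_ne_zero,
    not_false_eq_true] at this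
  linarith

set_option maxHeartbeats 1000000 in
theorem uadam_deterministic_telescoping (d : ℕ) (f : EuclideanSpace ℝ (Fin d) → ℝ)
    (L fstar : ℝ) (hf : Differentiable ℝ f)
    (hL : ∀ x y : EuclideanSpace ℝ (Fin d), ‖gradient f x - gradient f y‖ ≤ L * ‖x - y‖)
    (hbdd : ∀ z, fstar ≤ f z)
    (β lam η : ℝ) (hβ0 : 0 ≤ β) (hβ1 : β < 1) (hlam0 : 0 ≤ lam) (hlam1 : lam ≤ 1)
    (hη : 0 < η) (hLη : L * η ≤ 1 / 2)
    (x m : ℕ → EuclideanSpace ℝ (Fin d)) (hm0 : m 0 = 0)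
    (hm : ∀ t ≥ 1, m t = β • m (t - 1) + (1 - β) • gradient f (x t))
    (hx : ∀ t ≥ 1, x (t + 1) = x t - η • (m t - lam • (m t - gradient f (x t)))) :
    ∀ T ≥ 1,
      η / 2 * ∑ t ∈ Finset.Icc 1 T, ‖gradient f (x t)‖ ^ 2 ≤
        f (x 1) - fstar
          + (1 - lam) * η / 2 * ∑ t ∈ Finset.Icc 1 T, ‖m t - gradient f (x t)‖ ^ 2
          - η / 4 * ∑ t ∈ Finset.Icc 1 T,
              (lam * ‖gradient f (x t)‖ ^ 2 + (1 - lam) * ‖m t‖ ^ 2) := by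
  have hstep : ∀ t ≥ 1,
      η / 2 * ‖gradient f (x t)‖ ^ 2 ≤
        f (x t) - f (x (t + 1)) + (1 - lam) * η / 2 * ‖m t - gradient f (x t)‖ ^ 2
          - η / 4 * (lam * ‖gradient f (x t)‖ ^ 2 + (1 - lam) * ‖m t‖ ^ 2) := by
    intro t ht
    set G := gradient f (x t) with hG
    set M := m t with hM
    set u : EuclideanSpace ℝ (Fin d) := M - lam • (M - G) with hu
    have hx' : x (t + 1) = x t + (-η) • u := by
      rw [hx t ht]; module
    have hdesc := descent f L hf hL (x t) ((-η) • u)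
    rw [← hx'] at hdesc
    rw [real_inner_smul_right] at hdesc
    have hnorm : ‖(-η) • u‖ ^ 2 = η ^ 2 * ‖u‖ ^ 2 := by
      rw [norm_smul, mul_pow, Real.norm_eq_abs, sq_abs]; ring
    rw [hnorm] at hdesc
    have hpeq : 2 * (inner ℝ G M : ℝ) = ‖G‖ ^ 2 + ‖M‖ ^ 2 - ‖M - G‖ ^ 2 := by
      have h := @norm_sub_sq_real (EuclideanSpace ℝ (Fin d)) _ _ M G
      linarith [h, real_inner_comm G M]
    have hgu : (inner ℝ G u : ℝ) = inner ℝ G M - lam * (inner ℝ G M - ‖G‖ ^ 2) := by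
      rw [hu, inner_sub_right, real_inner_smul_right, inner_sub_right,
        real_inner_self_eq_norm_sq]
    have hu2 : ‖u‖ ^ 2 = ‖M‖ ^ 2 - 2 * lam * (‖M‖ ^ 2 - (inner ℝ G M : ℝ))
        + lam ^ 2 * ‖M - G‖ ^ 2 := by
      rw [hu]
      rw [@norm_sub_sq_real (EuclideanSpace ℝ (Fin d)) _ _ M (lam • (M - G))]
      rw [real_inner_smul_right, inner_sub_right, norm_smul, mul_pow, Real.norm_eq_abs, sq_abs,
        real_inner_self_eq_norm_sq, real_inner_comm M G]
      ring
    have hA : L / 2 * (η ^ 2 * ‖u‖ ^ 2) ≤ η / 4 * ‖u‖ ^ 2 := by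
      nlinarith [mul_nonneg (mul_nonneg hη.le (by linarith : (0:ℝ) ≤ 1 / 2 - L * η))
        (sq_nonneg ‖u‖), sq_nonneg ‖u‖]
    have hB : ‖u‖ ^ 2 ≤ lam * ‖G‖ ^ 2 + (1 - lam) * ‖M‖ ^ 2 := by
      rw [hu2]
      nlinarith [hpeq, mul_nonneg (mul_nonneg hlam0 (by linarith : (0:ℝ) ≤ 1 - lam))
        (sq_nonneg ‖M - G‖)]
    have hB' : η / 4 * ‖u‖ ^ 2 ≤ η / 4 * (lam * ‖G‖ ^ 2 + (1 - lam) * ‖M‖ ^ 2) :=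
      mul_le_mul_of_nonneg_left hB (by positivity)
    have heq : η * (inner ℝ G u : ℝ) =
        η / 2 * ‖G‖ ^ 2 - (1 - lam) * η / 2 * ‖M - G‖ ^ 2
          + η / 2 * (lam * ‖G‖ ^ 2 + (1 - lam) * ‖M‖ ^ 2) := by
      rw [hgu]
      linear_combination (η * (1 - lam) / 2) * hpeq
    linarith [hdesc, hA, hB', heq]
  intro T hT
  have hsum := Finset.sum_le_sum (fun t (htm : t ∈ Finset.Icc 1 T) =>
    hstep t (Finset.mem_Icc.mp htm).1)
  rw [← Finset.mul_sum] at hsum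
  have htel : ∑ t ∈ Finset.Icc 1 T, (f (x t) - f (x (t + 1))) = f (x 1) - f (x (T + 1)) := by
    clear hT hsum
    induction T with
    | zero => simp
    | succ n ih =>
      rw [Finset.sum_Icc_succ_top (by omega), ih]
      ring
  have hsplit : ∑ t ∈ Finset.Icc 1 T,
      (f (x t) - f (x (t + 1)) + (1 - lam) * η / 2 * ‖m t - gradient f (x t)‖ ^ 2
        - η / 4 * (lam * ‖gradient f (x t)‖ ^ 2 + (1 - lam) * ‖m t‖ ^ 2)) =
      (f (x 1) - f (x (T + 1)))
        + (1 - lam) * η / 2 * ∑ t ∈ Finset.Icc 1 T, ‖m t - gradient f (x t)‖ ^ 2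
        - η / 4 * ∑ t ∈ Finset.Icc 1 T,
            (lam * ‖gradient f (x t)‖ ^ 2 + (1 - lam) * ‖m t‖ ^ 2) := by
    rw [← htel, Finset.mul_sum, Finset.mul_sum, ← Finset.sum_add_distrib,
      ← Finset.sum_sub_distrib]
  rw [hsplit] at hsum
  have := hbdd (x (T + 1))
  linarith
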